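/- For a bivariate Gaussian copula C_θ with correlation θ ∈ (-1,1), there exists a constant M (depending on θ) such that |∂²C_θ/∂u∂v (u,v)| ≤ M · min( 1/(u(1-u)), 1/(v(1-v)) ) for all (u,v) ∈ (0,1)². -/

import Mathlib

open MeasureTheory Set

/-- The standard normal density. -/
noncomputable def stdPhi (x : ℝ) : ℝ := Real.exp (-x^2/2) / Real.sqrt (2*Real.pi)

/-- The standard normal cumulative distribution function. -/
noncomputable def stdCDF (x : ℝ) : ℝ := ∫ t in Set.Iic x, stdPhi t

/-- The density of the centered bivariate Gaussian with unit variances and correlation `θ`. -/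
noncomputable def biDensity (θ x y : ℝ) : ℝ :=
  (1/(2*Real.pi*Real.sqrt (1-θ^2))) * Real.exp (-(x^2 - 2*θ*x*y + y^2)/(2*(1-θ^2)))

/-- The cdf of the centered bivariate Gaussian with unit variances and correlation `θ`. -/
noncomputable def biCDF (θ x y : ℝ) : ℝ := ∫ s in Set.Iic x, ∫ t in Set.Iic y, biDensity θ s t

/-- The bivariate Gaussian copula with correlation `θ`. -/
noncomputable def biCop (θ : ℝ) (Φinv : ℝ → ℝ) (u v : ℝ) : ℝ := biCDF θ (Φinv u) (Φinv v)


open Real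
section Aux

lemma stdPhi_pos (x : ℝ) : 0 < stdPhi x :=
  div_pos (Real.exp_pos _) (Real.sqrt_pos.2 (by positivity))

lemma stdPhi_eq (x : ℝ) : stdPhi x = Real.exp (-(2⁻¹) * x^2) * (Real.sqrt (2*Real.pi))⁻¹ := by
  unfold stdPhi; rw [div_eq_mul_inv]; ring_nf

lemma stdPhi_continuous : Continuous stdPhi := by
  unfold stdPhi
  fun_prop

lemma stdPhi_integrable : Integrable stdPhi := by
  have h := (integrable_exp_neg_mul_sq (b := 2⁻¹) (by norm_num)).mul_const (Real.sqrt (2*Real.pi))⁻¹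
  exact h.congr (Filter.Eventually.of_forall fun x => (stdPhi_eq x).symm)

lemma stdPhi_integral : ∫ x, stdPhi x = 1 := by
  have h : ∫ x, stdPhi x = (∫ x : ℝ, Real.exp (-(2⁻¹) * x^2)) * (Real.sqrt (2*Real.pi))⁻¹ := by
    rw [← MeasureTheory.integral_mul_const]
    exact integral_congr_ae (Filter.Eventually.of_forall fun x => stdPhi_eq x)
  rw [h, integral_gaussian]
  rw [show Real.pi / 2⁻¹ = 2 * Real.pi by ring]
  rw [mul_inv_cancel₀ (by positivity)]

lemma stdCDF_hasDerivAt (x : ℝ) : HasDerivAt stdCDF (stdPhi x) x := by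
  have key : HasDerivAt (fun y => stdCDF 0 + ∫ t in (0:ℝ)..y, stdPhi t) (stdPhi x) x := by
    refine (intervalIntegral.integral_hasDerivAt_right
      (stdPhi_integrable.intervalIntegrable)
      (stdPhi_continuous.stronglyMeasurableAtFilter _ _)
      (stdPhi_continuous.continuousAt)).const_add _
  refine key.congr_of_eventuallyEq (Filter.Eventually.of_forall fun y => ?_)
  simp only []; rw [← intervalIntegral.integral_Iic_sub_Iic stdPhi_integrable.integrableOn
    stdPhi_integrable.integrableOn]
  unfold stdCDF; ring

lemma stdCDF_strictMono : StrictMono stdCDF := by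
  intro a b hab
  have h : 0 < ∫ t in a..b, stdPhi t :=
    intervalIntegral.intervalIntegral_pos_of_pos
      (stdPhi_integrable.intervalIntegrable) (fun x => stdPhi_pos x) hab
  have := intervalIntegral.integral_Iic_sub_Iic (f := stdPhi) (μ := volume)
    stdPhi_integrable.integrableOn stdPhi_integrable.integrableOn (a := a) (b := b)
  unfold stdCDF; linarith

lemma stdCDF_mem_Ioo (x : ℝ) : stdCDF x ∈ Set.Ioo (0:ℝ) 1 := by
  constructor
  · have h1 : (0:ℝ) ≤ stdCDF (x - 1) :=
      setIntegral_nonneg measurableSet_Iic (fun t _ => (stdPhi_pos t).le)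
    have h2 := stdCDF_strictMono (show x - 1 < x by linarith)
    linarith
  · have hsplit : stdCDF x + ∫ t in Set.Ioi x, stdPhi t = 1 := by
      rw [show (1:ℝ) = ∫ t, stdPhi t from stdPhi_integral.symm]
      exact intervalIntegral.integral_Iic_add_Ioi stdPhi_integrable.integrableOn stdPhi_integrable.integrableOn
    have hpos : 0 < ∫ t in Set.Ioi x, stdPhi t := by
      have h1 : 0 < ∫ t in x..(x+1), stdPhi t :=
        intervalIntegral.intervalIntegral_pos_of_pos
          (stdPhi_integrable.intervalIntegrable) (fun t => stdPhi_pos t) (by linarith)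
      have h2 : (∫ t in Set.Ioc x (x+1), stdPhi t) ≤ ∫ t in Set.Ioi x, stdPhi t := by
        apply setIntegral_mono_set stdPhi_integrable.integrableOn
          (Filter.Eventually.of_forall fun t => (stdPhi_pos t).le)
        exact HasSubset.Subset.eventuallyLE Set.Ioc_subset_Ioi_self
      rw [intervalIntegral.integral_of_le (by linarith)] at h1
      linarith
    linarith

lemma stdPhi_even (x : ℝ) : stdPhi (-x) = stdPhi x := by unfold stdPhi; ring_nf

lemma integral_Ioi_zero_stdPhi : ∫ t in Set.Ioi (0:ℝ), stdPhi t = 1/2 := by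
  have hsym : ∫ t in Set.Ioi (0:ℝ), stdPhi t = ∫ t in Set.Iic (0:ℝ), stdPhi t := by
    have h := integral_comp_neg_Ioi (0:ℝ) stdPhi
    rw [neg_zero] at h
    rw [← h]
    exact setIntegral_congr_fun measurableSet_Ioi (fun t _ => (stdPhi_even t).symm)
  have hsum : (∫ t in Set.Iic (0:ℝ), stdPhi t) + ∫ t in Set.Ioi (0:ℝ), stdPhi t = 1 := by
    rw [← stdPhi_integral]
    exact intervalIntegral.integral_Iic_add_Ioi stdPhi_integrable.integrableOn
      stdPhi_integrable.integrableOn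
  linarith

lemma stdCDF_eq_one_sub (x : ℝ) : 1 - stdCDF x = ∫ t in Set.Ioi x, stdPhi t := by
  have hsum : stdCDF x + ∫ t in Set.Ioi x, stdPhi t = 1 := by
    rw [← stdPhi_integral]
    exact intervalIntegral.integral_Iic_add_Ioi stdPhi_integrable.integrableOn
      stdPhi_integrable.integrableOn
  linarith

lemma integral_Ioi_shift (x : ℝ) (f : ℝ → ℝ) :
    ∫ t in Set.Ioi x, f (t - x) = ∫ t in Set.Ioi (0:ℝ), f t := by
  rw [← MeasureTheory.integral_indicator measurableSet_Ioi,
      ← MeasureTheory.integral_indicator measurableSet_Ioi,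
      ← integral_sub_right_eq_self (fun t => (Set.Ioi (0:ℝ)).indicator f t) x]
  congr 1
  ext t
  simp [Set.indicator, Set.mem_Ioi, sub_pos]

lemma tail_bound {x : ℝ} (hx : 0 ≤ x) :
    ∫ t in Set.Ioi x, stdPhi t ≤ (1/2) * Real.exp (-x^2/2) := by
  have hpt : ∀ t ∈ Set.Ioi x, stdPhi t ≤ Real.exp (-x^2/2) * stdPhi (t - x) := by
    intro t ht
    simp only [Set.mem_Ioi] at ht
    unfold stdPhi
    rw [← mul_div_assoc]
    gcongr
    rw [← Real.exp_add, Real.exp_le_exp]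
    nlinarith
  have hmono : (∫ t in Set.Ioi x, stdPhi t)
      ≤ ∫ t in Set.Ioi x, Real.exp (-x^2/2) * stdPhi (t - x) := by
    refine setIntegral_mono_on stdPhi_integrable.integrableOn ?_ measurableSet_Ioi hpt
    exact ((stdPhi_integrable.comp_sub_right x).const_mul _).integrableOn
  have heq : ∫ t in Set.Ioi x, Real.exp (-x^2/2) * stdPhi (t - x)
      = Real.exp (-x^2/2) * ∫ t in Set.Ioi x, stdPhi (t - x) := by
    rw [MeasureTheory.integral_const_mul]
  rw [heq, integral_Ioi_shift x stdPhi, integral_Ioi_zero_stdPhi] at hmono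
  linarith

lemma mills (x : ℝ) : stdCDF x * (1 - stdCDF x) ≤ (1/2) * Real.exp (-x^2/2) := by
  obtain ⟨h0, h1⟩ := stdCDF_mem_Ioo x
  rcases le_or_gt 0 x with hx | hx
  · have := tail_bound hx
    rw [← stdCDF_eq_one_sub] at this
    nlinarith
  · have hx' : (0:ℝ) ≤ -x := by linarith
    have := tail_bound hx'
    have hcdf : stdCDF x = ∫ t in Set.Ioi (-x), stdPhi t := by
      rw [← integral_comp_neg_Iic]
      exact setIntegral_congr_fun measurableSet_Iic (fun t _ => (stdPhi_even t).symm)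
    rw [← hcdf] at this
    have hsq : (-x)^2 = x^2 := by ring
    rw [hsq] at this
    nlinarith

lemma Phinv_continuousAt {Φinv : ℝ → ℝ} (hinv : ∀ w ∈ Set.Ioo (0:ℝ) 1, stdCDF (Φinv w) = w)
    {u : ℝ} (hu : u ∈ Set.Ioo (0:ℝ) 1) : ContinuousAt Φinv u := by
  set x := Φinv u with hx
  have hux : stdCDF x = u := hinv u hu
  rw [ContinuousAt, Metric.tendsto_nhds]
  intro ε hε
  have ha : stdCDF (x - ε) < u := hux ▸ stdCDF_strictMono (by linarith)
  have hb : u < stdCDF (x + ε) := hux ▸ stdCDF_strictMono (by linarith)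
  filter_upwards [Ioo_mem_nhds ha hb] with w hw
  obtain ⟨hw1, hw2⟩ := hw
  have hw01 : w ∈ Set.Ioo (0:ℝ) 1 :=
    ⟨lt_trans (stdCDF_mem_Ioo _).1 hw1, lt_trans hw2 (stdCDF_mem_Ioo _).2⟩
  have hcw : stdCDF (Φinv w) = w := hinv w hw01
  have l1 : x - ε < Φinv w := by
    by_contra h
    push_neg at h
    exact absurd (hcw ▸ stdCDF_strictMono.monotone h) (not_le.2 hw1)
  have l2 : Φinv w < x + ε := by
    by_contra h
    push_neg at h
    exact absurd (hcw ▸ stdCDF_strictMono.monotone h) (not_le.2 hw2)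
  rw [Real.dist_eq, abs_sub_lt_iff]
  constructor <;> [skip; skip] <;> simp only [← hx] <;> linarith

lemma Phinv_hasDerivAt {Φinv : ℝ → ℝ} (hinv : ∀ w ∈ Set.Ioo (0:ℝ) 1, stdCDF (Φinv w) = w)
    {u : ℝ} (hu : u ∈ Set.Ioo (0:ℝ) 1) : HasDerivAt Φinv (stdPhi (Φinv u))⁻¹ u := by
  refine HasDerivAt.of_local_left_inverse (Phinv_continuousAt hinv hu)
    (stdCDF_hasDerivAt _) (ne_of_gt (stdPhi_pos _)) ?_
  filter_upwards [Ioo_mem_nhds hu.1 hu.2] with w hw using hinv w hw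

/-- generic FTC for `Iic` integrals -/
lemma hasDerivAt_integral_Iic {f : ℝ → ℝ} (hf : Integrable f) (hc : Continuous f) (y : ℝ) :
    HasDerivAt (fun z => ∫ t in Set.Iic z, f t) (f y) y := by
  have key : HasDerivAt (fun z => (∫ t in Set.Iic (0:ℝ), f t) + ∫ t in (0:ℝ)..z, f t) (f y) y :=
    (intervalIntegral.integral_hasDerivAt_right hf.intervalIntegrable
      (hc.stronglyMeasurableAtFilter _ _) hc.continuousAt).const_add _
  refine key.congr_of_eventuallyEq (Filter.Eventually.of_forall fun z => ?_)
  simp only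
  rw [← intervalIntegral.integral_Iic_sub_Iic hf.integrableOn hf.integrableOn]
  ring

section biDensityFacts
variable {θ : ℝ} (hθ2 : θ^2 < 1)
include hθ2

lemma one_sub_sq_pos : 0 < 1 - θ^2 := by linarith

lemma abs_lt_one : |θ| < 1 := by
  rw [← Real.sqrt_one, ← Real.sqrt_sq_eq_abs]
  exact Real.sqrt_lt_sqrt (sq_nonneg θ) (by linarith)

/-- exponential decay constant -/
noncomputable def cθ (θ : ℝ) : ℝ := (1 - |θ|)/(2*(1-θ^2))

lemma cθ_pos : 0 < cθ θ := by
  have := abs_lt_one hθ2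
  exact div_pos (by linarith) (by linarith)

lemma biDensity_pos (s t : ℝ) : 0 < biDensity θ s t := by
  unfold biDensity
  have h := one_sub_sq_pos hθ2
  positivity

lemma biDensity_le (s t : ℝ) :
    biDensity θ s t ≤ (1/(2*Real.pi*Real.sqrt (1-θ^2))) *
      (Real.exp (-(cθ θ) * s^2) * Real.exp (-(cθ θ) * t^2)) := by
  have h := one_sub_sq_pos hθ2
  unfold biDensity
  rw [← Real.exp_add]
  have hc : (0:ℝ) ≤ 1/(2*Real.pi*Real.sqrt (1-θ^2)) := by positivity
  refine mul_le_mul_of_nonneg_left (Real.exp_le_exp.2 ?_) hc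
  have hrhs : -(cθ θ) * s^2 + -(cθ θ) * t^2
      = (-((1-|θ|) * s^2) - (1-|θ|) * t^2) / (2*(1-θ^2)) := by
    unfold cθ; field_simp; ring
  rw [hrhs, div_le_div_iff_of_pos_right (by linarith : (0:ℝ) < 2*(1-θ^2))]
  rcases le_or_gt 0 θ with hs | hs
  · rw [abs_of_nonneg hs]; nlinarith [sq_nonneg (s - t), sq_nonneg (s+t)]
  · rw [abs_of_neg hs]; nlinarith [sq_nonneg (s + t), sq_nonneg (s-t)]

omit hθ2 in
lemma biDensity_continuous : Continuous (fun p : ℝ × ℝ => biDensity θ p.1 p.2) := by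
  unfold biDensity
  fun_prop

omit hθ2 in
lemma biDensity_cont_left (t : ℝ) : Continuous (fun s => biDensity θ s t) := by
  unfold biDensity; fun_prop

omit hθ2 in
lemma biDensity_cont_fun_y (x : ℝ) : ∀ s : ℝ, Continuous (fun y => biDensity θ s y) := by
  intro s; unfold biDensity; fun_prop

lemma biDensity_integrable_left (t : ℝ) : Integrable (fun s => biDensity θ s t) := by
  refine Integrable.mono' (g := fun s => (1/(2*Real.pi*Real.sqrt (1-θ^2)) *
      Real.exp (-(cθ θ) * t^2)) * Real.exp (-(cθ θ) * s^2)) ?_ ?_ ?_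
  · exact (integrable_exp_neg_mul_sq (cθ_pos hθ2)).const_mul _
  · exact (biDensity_cont_left t).aestronglyMeasurable
  · refine Filter.Eventually.of_forall fun s => ?_
    rw [Real.norm_eq_abs, abs_of_pos (biDensity_pos hθ2 s t)]
    calc biDensity θ s t ≤ _ := biDensity_le hθ2 s t
    _ = _ := by ring

lemma biDensity_integrable_prod :
    Integrable (Function.uncurry fun s t => biDensity θ s t)
      ((volume : Measure ℝ).prod (volume : Measure ℝ)) := by
  refine Integrable.mono' (g := fun p : ℝ × ℝ => (1/(2*Real.pi*Real.sqrt (1-θ^2))) *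
      (Real.exp (-(cθ θ) * p.1^2) * Real.exp (-(cθ θ) * p.2^2))) ?_ ?_ ?_
  · exact ((integrable_exp_neg_mul_sq (cθ_pos hθ2)).mul_prod
      (integrable_exp_neg_mul_sq (cθ_pos hθ2))).const_mul _
  · exact (biDensity_continuous).aestronglyMeasurable
  · refine Filter.Eventually.of_forall fun p => ?_
    simp only [Function.uncurry]
    rw [Real.norm_eq_abs, abs_of_pos (biDensity_pos hθ2 p.1 p.2)]
    exact biDensity_le hθ2 p.1 p.2

/-- partial integral -/
noncomputable def gg (θ x y : ℝ) : ℝ := ∫ s in Set.Iic x, biDensity θ s y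

lemma gg_continuous_y (x : ℝ) : Continuous (fun y => gg θ x y) := by
  refine continuous_of_dominated (bound := fun s => (1/(2*Real.pi*Real.sqrt (1-θ^2))) *
      Real.exp (-(cθ θ) * s^2)) ?_ ?_ ?_ ?_
  · intro y
    exact (biDensity_cont_left y).aestronglyMeasurable
  · intro y
    refine Filter.Eventually.of_forall fun s => ?_
    rw [Real.norm_eq_abs, abs_of_pos (biDensity_pos hθ2 s y)]
    calc biDensity θ s y ≤ _ := biDensity_le hθ2 s y
    _ ≤ _ := by
        beta_reduce
        have h := one_sub_sq_pos hθ2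
        have h1 : Real.exp (-(cθ θ) * y^2) ≤ 1 := by
          rw [Real.exp_le_one_iff]
          have := cθ_pos hθ2
          nlinarith [sq_nonneg y]
        have h2 : (0:ℝ) < 1/(2*Real.pi*Real.sqrt (1-θ^2)) := by
          have : 0 < Real.sqrt (1 - θ^2) := Real.sqrt_pos.2 h
          positivity
        nlinarith [mul_nonneg (mul_pos h2 (Real.exp_pos (-(cθ θ) * s^2))).le
          (sub_nonneg.2 h1)]
  · exact ((integrable_exp_neg_mul_sq (cθ_pos hθ2)).const_mul _).integrableOn
  · exact Filter.Eventually.of_forall (biDensity_cont_fun_y x)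

lemma gg_integrable_y (x : ℝ) : Integrable (fun y => gg θ x y) := by
  have hb : Integrable (fun y => ((1/(2*Real.pi*Real.sqrt (1-θ^2))) *
      ∫ s : ℝ, Real.exp (-(cθ θ) * s^2)) * Real.exp (-(cθ θ) * y^2)) :=
    (integrable_exp_neg_mul_sq (cθ_pos hθ2)).const_mul _
  refine Integrable.mono' hb (gg_continuous_y hθ2 x).aestronglyMeasurable ?_
  refine Filter.Eventually.of_forall fun y => ?_
  have hnn : 0 ≤ gg θ x y :=
    setIntegral_nonneg measurableSet_Iic fun s _ => (biDensity_pos hθ2 s y).le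
  rw [Real.norm_eq_abs, abs_of_nonneg hnn]
  unfold gg
  calc (∫ s in Set.Iic x, biDensity θ s y)
      ≤ ∫ s in Set.Iic x, (1/(2*Real.pi*Real.sqrt (1-θ^2))) *
          (Real.exp (-(cθ θ) * s^2) * Real.exp (-(cθ θ) * y^2)) := by
        refine setIntegral_mono_on (biDensity_integrable_left hθ2 y).integrableOn
          ?_ measurableSet_Iic (fun s _ => biDensity_le hθ2 s y)
        exact (((integrable_exp_neg_mul_sq (cθ_pos hθ2)).mul_const _).const_mul _).integrableOn
    _ ≤ ∫ s : ℝ, (1/(2*Real.pi*Real.sqrt (1-θ^2))) *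
          (Real.exp (-(cθ θ) * s^2) * Real.exp (-(cθ θ) * y^2)) := by
        refine setIntegral_le_integral
          (((integrable_exp_neg_mul_sq (cθ_pos hθ2)).mul_const _).const_mul _) ?_
        refine Filter.Eventually.of_forall fun s => ?_
        have h := one_sub_sq_pos hθ2
        have : 0 < Real.sqrt (1 - θ^2) := Real.sqrt_pos.2 h
        positivity
    _ = _ := by
        simp_rw [mul_assoc, integral_const_mul, MeasureTheory.integral_mul_const]
        try ring

lemma biCDF_swap (x y : ℝ) : biCDF θ x y = ∫ t in Set.Iic y, gg θ x t := by
  unfold biCDF gg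
  refine MeasureTheory.integral_integral_swap ?_
  rw [Measure.prod_restrict]
  exact (biDensity_integrable_prod hθ2).restrict

lemma biCDF_hasDerivAt_y (x y : ℝ) : HasDerivAt (fun z => biCDF θ x z) (gg θ x y) y := by
  have h : (fun z => biCDF θ x z) = fun z => ∫ t in Set.Iic z, gg θ x t :=
    funext fun z => biCDF_swap hθ2 x z
  rw [h]
  exact hasDerivAt_integral_Iic (gg_integrable_y hθ2 x) (gg_continuous_y hθ2 x) y

lemma gg_hasDerivAt_x (x y : ℝ) : HasDerivAt (fun z => gg θ z y) (biDensity θ x y) x :=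
  hasDerivAt_integral_Iic (biDensity_integrable_left hθ2 y)
    (biDensity_cont_left y) x

end biDensityFacts

lemma stdPhi_inv (z : ℝ) : (stdPhi z)⁻¹ = Real.sqrt (2*Real.pi) * Real.exp (z^2/2) := by
  unfold stdPhi
  rw [inv_div, div_eq_mul_inv, ← Real.exp_neg]
  ring_nf

lemma ratio_eq {θ : ℝ} (hθ2 : θ^2 < 1) (x y : ℝ) :
    biDensity θ x y * (stdPhi x)⁻¹ * (stdPhi y)⁻¹
      = (Real.sqrt (1-θ^2))⁻¹
        * Real.exp (-(x^2 - 2*θ*x*y + y^2)/(2*(1-θ^2)) + x^2/2 + y^2/2) := by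
  have hS : Real.sqrt (2*Real.pi) * Real.sqrt (2*Real.pi) = 2*Real.pi := by
    exact Real.mul_self_sqrt (by positivity)
  rw [stdPhi_inv, stdPhi_inv, Real.exp_add, Real.exp_add]
  unfold biDensity
  have hs2 : Real.sqrt (1-θ^2) ≠ 0 := ne_of_gt (Real.sqrt_pos.2 (one_sub_sq_pos hθ2))
  have hpi : Real.pi ≠ 0 := ne_of_gt Real.pi_pos
  field_simp
  ring_nf
  rw [Real.sq_sqrt (by positivity)]

lemma exp_arg_le_y {θ : ℝ} (hθ2 : θ^2 < 1) (x y : ℝ) :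
    -(x^2 - 2*θ*x*y + y^2)/(2*(1-θ^2)) + x^2/2 + y^2/2 ≤ y^2/2 := by
  have h := one_sub_sq_pos hθ2
  have key : -(x^2 - 2*θ*x*y + y^2)/(2*(1-θ^2)) ≤ -(x^2/2) := by
    rw [div_le_iff₀ (by linarith : (0:ℝ) < 2*(1-θ^2))]
    nlinarith [sq_nonneg (θ*x - y)]
  linarith

lemma exp_arg_le_x {θ : ℝ} (hθ2 : θ^2 < 1) (x y : ℝ) :
    -(x^2 - 2*θ*x*y + y^2)/(2*(1-θ^2)) + x^2/2 + y^2/2 ≤ x^2/2 := by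
  have h := one_sub_sq_pos hθ2
  have key : -(x^2 - 2*θ*x*y + y^2)/(2*(1-θ^2)) ≤ -(y^2/2) := by
    rw [div_le_iff₀ (by linarith : (0:ℝ) < 2*(1-θ^2))]
    nlinarith [sq_nonneg (θ*y - x)]
  linarith


end Aux

/-- For a bivariate Gaussian copula with `θ ∈ (-1,1)`, there is a constant `M` with
`|∂²C/∂u∂v| ≤ M · min(1/(u(1-u)), 1/(v(1-v)))` on `(0,1)²`. -/
theorem stmt4 (θ : ℝ) (hθ : θ ∈ Set.Ioo (-1:ℝ) 1)
    (Φinv : ℝ → ℝ)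
    (hinv : ∀ w ∈ Set.Ioo (0:ℝ) 1, stdCDF (Φinv w) = w)
    (hinv' : ∀ x : ℝ, Φinv (stdCDF x) = x) :
    ∃ M : ℝ, ∀ u ∈ Set.Ioo (0:ℝ) 1, ∀ v ∈ Set.Ioo (0:ℝ) 1,
      |deriv (fun a => deriv (fun b => biCop θ Φinv a b) v) u|
        ≤ M * min (1/(u*(1-u))) (1/(v*(1-v))) := by
  obtain ⟨hθl, hθr⟩ := hθ
  have hθ2 : θ^2 < 1 := by nlinarith
  have hs2 : 0 < Real.sqrt (1-θ^2) := Real.sqrt_pos.2 (one_sub_sq_pos hθ2)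
  refine ⟨(2 * Real.sqrt (1-θ^2))⁻¹, fun u hu v hv => ?_⟩
  set x₀ := Φinv u with hx₀
  set y₀ := Φinv v with hy₀
  -- inner derivative, for every a
  have hinner : ∀ a : ℝ, deriv (fun b => biCop θ Φinv a b) v
      = gg θ (Φinv a) y₀ * (stdPhi y₀)⁻¹ := by
    intro a
    have h1 := biCDF_hasDerivAt_y hθ2 (Φinv a) y₀
    have h2 := Phinv_hasDerivAt hinv hv
    have h3 := h1.comp v h2
    exact h3.deriv
  have hfun : (fun a => deriv (fun b => biCop θ Φinv a b) v)
      = fun a => gg θ (Φinv a) y₀ * (stdPhi y₀)⁻¹ := funext hinner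
  -- outer derivative
  have h4 := gg_hasDerivAt_x hθ2 x₀ y₀
  have h5 := Phinv_hasDerivAt hinv hu
  have h6 := (h4.comp u h5).mul_const (stdPhi y₀)⁻¹
  have hD : deriv (fun a => deriv (fun b => biCop θ Φinv a b) v) u
      = biDensity θ x₀ y₀ * (stdPhi x₀)⁻¹ * (stdPhi y₀)⁻¹ := by
    rw [hfun]
    exact h6.deriv
  rw [hD]
  set D := biDensity θ x₀ y₀ * (stdPhi x₀)⁻¹ * (stdPhi y₀)⁻¹ with hDdef
  have hDpos : 0 < D := by
    have := biDensity_pos hθ2 x₀ y₀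
    have h1 := stdPhi_pos x₀
    have h2 := stdPhi_pos y₀
    positivity
  rw [abs_of_pos hDpos]
  -- bound by exp
  have hbx : D ≤ (Real.sqrt (1-θ^2))⁻¹ * Real.exp (x₀^2/2) := by
    rw [hDdef, ratio_eq hθ2]
    exact mul_le_mul_of_nonneg_left (Real.exp_le_exp.2 (exp_arg_le_x hθ2 x₀ y₀))
      (inv_nonneg.2 hs2.le)
  have hby : D ≤ (Real.sqrt (1-θ^2))⁻¹ * Real.exp (y₀^2/2) := by
    rw [hDdef, ratio_eq hθ2]
    exact mul_le_mul_of_nonneg_left (Real.exp_le_exp.2 (exp_arg_le_y hθ2 x₀ y₀))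
      (inv_nonneg.2 hs2.le)
  -- mills bound
  have hmills : ∀ w ∈ Set.Ioo (0:ℝ) 1, Real.exp ((Φinv w)^2/2) ≤ (1/2) * (1/(w*(1-w))) := by
    intro w hw
    have hm := mills (Φinv w)
    rw [hinv w hw] at hm
    have hww : 0 < w * (1-w) := mul_pos hw.1 (by linarith [hw.2])
    have hexp : Real.exp (-(Φinv w)^2/2) = (Real.exp ((Φinv w)^2/2))⁻¹ := by
      rw [← Real.exp_neg]; congr 1; ring
    rw [hexp] at hm
    have hE := Real.exp_pos ((Φinv w)^2/2)
    have hkey : Real.exp ((Φinv w)^2/2) * (w*(1-w)) ≤ 1/2 := by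
      calc Real.exp ((Φinv w)^2/2) * (w*(1-w))
          ≤ Real.exp ((Φinv w)^2/2) * ((1/2) * (Real.exp ((Φinv w)^2/2))⁻¹) :=
            mul_le_mul_of_nonneg_left hm hE.le
        _ = 1/2 := by field_simp
    rw [show (1:ℝ)/2 * (1/(w*(1-w))) = (1/2)/(w*(1-w)) by ring, le_div_iff₀ hww]
    linarith
  have hww : ∀ w : ℝ, w ∈ Set.Ioo (0:ℝ) 1 → (0:ℝ) ≤ 1/(w*(1-w)) := by
    intro w hw
    have : 0 < w * (1-w) := mul_pos hw.1 (by linarith [hw.2])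
    positivity
  have hMu : D ≤ (2 * Real.sqrt (1-θ^2))⁻¹ * (1/(u*(1-u))) := by
    calc D ≤ (Real.sqrt (1-θ^2))⁻¹ * Real.exp (x₀^2/2) := hbx
      _ ≤ (Real.sqrt (1-θ^2))⁻¹ * ((1/2) * (1/(u*(1-u)))) :=
          mul_le_mul_of_nonneg_left (hmills u hu) (inv_nonneg.2 hs2.le)
      _ = (2 * Real.sqrt (1-θ^2))⁻¹ * (1/(u*(1-u))) := by rw [mul_inv]; ring
  have hMv : D ≤ (2 * Real.sqrt (1-θ^2))⁻¹ * (1/(v*(1-v))) := by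
    calc D ≤ (Real.sqrt (1-θ^2))⁻¹ * Real.exp (y₀^2/2) := hby
      _ ≤ (Real.sqrt (1-θ^2))⁻¹ * ((1/2) * (1/(v*(1-v)))) :=
          mul_le_mul_of_nonneg_left (hmills v hv) (inv_nonneg.2 hs2.le)
      _ = (2 * Real.sqrt (1-θ^2))⁻¹ * (1/(v*(1-v))) := by rw [mul_inv]; ring
  rcases min_cases (1/(u*(1-u))) (1/(v*(1-v))) with ⟨hmin, _⟩ | ⟨hmin, _⟩ <;> rw [hmin]
  · exact hMu
  · exact hMv
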